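/- The co-rotational profile ũ*(t,r) = (2/r)·arctan(r/(√(d−4)·t)) satisfies, for all t > 0 and r > 0, the equation (∂_t² − ∂_r² − ((d−1)/r)∂_r) ũ*(t,r) + (d−3)·(sin(2r·ũ*(t,r)) − 2r·ũ*(t,r))/(2r³) = 0. -/

import Mathlib

open Real

/-- The co-rotational profile `ũ*(t,r) = (2/r)·arctan(r/(√(d−4)·t))` satisfies,
for all `t > 0` and `r > 0`,
`(∂_t² − ∂_r² − ((d−1)/r)∂_r) ũ* + (d−3)(sin(2r·ũ*) − 2r·ũ*)/(2r³) = 0`. -/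
lemma sin_four_arctan (x : ℝ) :
    Real.sin (4 * Real.arctan x) = 4 * x * (1 - x ^ 2) / (1 + x ^ 2) ^ 2 := by
  have h1 : (0:ℝ) < 1 + x ^ 2 := by positivity
  have hsq : Real.sqrt (1 + x ^ 2) ^ 2 = 1 + x ^ 2 := Real.sq_sqrt h1.le
  have hsqpos : (0:ℝ) < Real.sqrt (1 + x ^ 2) := Real.sqrt_pos.mpr h1
  have hmul : Real.sqrt (1 + x ^ 2) * Real.sqrt (1 + x ^ 2) = 1 + x ^ 2 :=
    Real.mul_self_sqrt h1.le
  have h2 : Real.sin (2 * Real.arctan x) = 2 * x / (1 + x ^ 2) := by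
    rw [Real.sin_two_mul, Real.sin_arctan, Real.cos_arctan]
    rw [mul_assoc, div_mul_div_comm, hmul]
    ring
  have h3 : Real.cos (2 * Real.arctan x) = (1 - x ^ 2) / (1 + x ^ 2) := by
    rw [Real.cos_two_mul, Real.cos_arctan]
    rw [div_pow, one_pow, hsq]
    field_simp
    ring
  have h4 : (4:ℝ) * Real.arctan x = 2 * (2 * Real.arctan x) := by ring
  rw [h4, Real.sin_two_mul, h2, h3]
  field_simp
  ring

lemma L1 (s r t : ℝ) (hs : s ≠ 0) (hr : r ≠ 0) (ht : t ≠ 0) :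
    HasDerivAt (fun t' => (2 / r) * Real.arctan (r / (s * t')))
      (-2 * s / (s ^ 2 * t ^ 2 + r ^ 2)) t := by
  have hD : s ^ 2 * t ^ 2 + r ^ 2 ≠ 0 := by positivity
  have h0 : HasDerivAt (fun t' : ℝ => r / (s * t')) (-(r / (s * t ^ 2))) t := by
    have heq : (fun t' : ℝ => r / (s * t')) = fun t' : ℝ => r / s * t'⁻¹ := by
      funext t'; ring
    rw [heq]
    have h := (hasDerivAt_inv ht).const_mul (r / s)
    refine h.congr_deriv ?_
    field_simp
  have h1 := (Real.hasDerivAt_arctan (r / (s * t))).comp t h0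
  have h2 := h1.const_mul (2 / r)
  refine h2.congr_deriv ?_
  have hx : 1 + (r / (s * t)) ^ 2 ≠ 0 := by positivity
  field_simp

lemma L2 (s r t : ℝ) (hD : s ^ 2 * t ^ 2 + r ^ 2 ≠ 0) :
    HasDerivAt (fun t' => -2 * s / (s ^ 2 * t' ^ 2 + r ^ 2))
      (4 * s ^ 3 * t / (s ^ 2 * t ^ 2 + r ^ 2) ^ 2) t := by
  have hg : HasDerivAt (fun t' : ℝ => s ^ 2 * t' ^ 2 + r ^ 2) (s ^ 2 * (2 * t)) t := by
    simpa using ((hasDerivAt_pow 2 t).const_mul (s ^ 2)).add_const (r ^ 2)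
  have := (hasDerivAt_const t (-2 * s)).div hg hD
  refine this.congr_deriv ?_
  field_simp
  ring

lemma L3 (s r t : ℝ) (hst : s * t ≠ 0) (hr : r ≠ 0) :
    HasDerivAt (fun r' => (2 / r') * Real.arctan (r' / (s * t)))
      (-2 * Real.arctan (r / (s * t)) / r ^ 2
        + 2 * s * t / (r * (s ^ 2 * t ^ 2 + r ^ 2))) r := by
  have hD : s ^ 2 * t ^ 2 + r ^ 2 ≠ 0 := by
    have : s ^ 2 * t ^ 2 ≠ 0 := by
      have := hst; intro h; apply this; nlinarith [sq_nonneg (s*t), sq_nonneg r]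
    positivity
  have hs : s ≠ 0 := fun h => hst (by simp [h])
  have ht : t ≠ 0 := fun h => hst (by simp [h])
  have h0 : HasDerivAt (fun r' : ℝ => r' / (s * t)) (1 / (s * t)) r := by
    simpa using (hasDerivAt_id r).div_const (s * t)
  have h1 := (Real.hasDerivAt_arctan (r / (s * t))).comp r h0
  have h2 : HasDerivAt (fun r' : ℝ => 2 / r') (-(2 / r ^ 2)) r := by
    have heq : (fun r' : ℝ => 2 / r') = fun r' : ℝ => (2:ℝ) * r'⁻¹ := by
      funext r'; ring
    rw [heq]
    have h := (hasDerivAt_inv hr).const_mul (2:ℝ)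
    refine h.congr_deriv ?_
    field_simp
  have h3 := h2.mul h1
  refine h3.congr_deriv ?_
  simp only [Function.comp_apply]
  have hx : 1 + (r / (s * t)) ^ 2 ≠ 0 := by positivity
  field_simp

lemma L4 (s r t : ℝ) (hst : s * t ≠ 0) (hr : r ≠ 0) :
    HasDerivAt (fun r' => -2 * Real.arctan (r' / (s * t)) / r' ^ 2
        + 2 * s * t / (r' * (s ^ 2 * t ^ 2 + r' ^ 2)))
      (4 * Real.arctan (r / (s * t)) / r ^ 3
        - 4 * s * t / (r ^ 2 * (s ^ 2 * t ^ 2 + r ^ 2))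
        - 4 * s * t / (s ^ 2 * t ^ 2 + r ^ 2) ^ 2) r := by
  have hs : s ≠ 0 := fun h => hst (by simp [h])
  have ht : t ≠ 0 := fun h => hst (by simp [h])
  have hD : s ^ 2 * t ^ 2 + r ^ 2 ≠ 0 := by
    have h1 : (0:ℝ) < s ^ 2 * t ^ 2 := by positivity
    positivity
  have h0 : HasDerivAt (fun r' : ℝ => r' / (s * t)) (1 / (s * t)) r := by
    simpa using (hasDerivAt_id r).div_const (s * t)
  have h1 := ((Real.hasDerivAt_arctan (r / (s * t))).comp r h0).const_mul (-2 : ℝ)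
  have hpow : HasDerivAt (fun r' : ℝ => r' ^ 2) (2 * r) r := by
    simpa using hasDerivAt_pow 2 r
  have hr2 : r ^ 2 ≠ 0 := pow_ne_zero 2 hr
  have hA := h1.div hpow hr2
  have hden : HasDerivAt (fun r' : ℝ => r' * (s ^ 2 * t ^ 2 + r' ^ 2))
      (s ^ 2 * t ^ 2 + 3 * r ^ 2) r := by
    have := (hasDerivAt_id r).mul (((hasDerivAt_pow 2 r).const_add (s ^ 2 * t ^ 2)))
    refine this.congr_deriv ?_
    simp; ring
  have hden0 : r * (s ^ 2 * t ^ 2 + r ^ 2) ≠ 0 := mul_ne_zero hr hD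
  have hB := (hasDerivAt_const r (2 * s * t)).div hden hden0
  have h := hA.add hB
  refine h.congr_deriv ?_
  simp only [Function.comp_apply]
  have hx : 1 + (r / (s * t)) ^ 2 ≠ 0 := by positivity
  field_simp
  ring

theorem ustar_profile_solves_wave (d : ℕ) (hd : 5 ≤ d)
    (u : ℝ → ℝ → ℝ)
    (hu : ∀ t r : ℝ, u t r = (2 / r) * Real.arctan (r / (Real.sqrt ((d : ℝ) - 4) * t))) :
    ∀ t r : ℝ, 0 < t → 0 < r →
      deriv (fun t' => deriv (fun t'' => u t'' r) t') t
        - deriv (fun r' => deriv (fun r'' => u t r'') r') r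
        - (((d : ℝ) - 1) / r) * deriv (fun r'' => u t r'') r
        + ((d : ℝ) - 3) * (Real.sin (2 * r * u t r) - 2 * r * u t r) / (2 * r ^ 3) = 0 := by
  intro t r ht hr
  set s : ℝ := Real.sqrt ((d : ℝ) - 4) with hs_def
  have hd4 : (0:ℝ) < (d : ℝ) - 4 := by
    have : (5:ℝ) ≤ (d:ℝ) := by exact_mod_cast hd
    linarith
  have hs0 : 0 < s := Real.sqrt_pos.mpr hd4
  have hs2 : s ^ 2 = (d : ℝ) - 4 := Real.sq_sqrt hd4.le
  have hdd : (d : ℝ) = s ^ 2 + 4 := by linarith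
  have hst : s * t ≠ 0 := mul_ne_zero hs0.ne' ht.ne'
  have hD : s ^ 2 * t ^ 2 + r ^ 2 ≠ 0 := by positivity
  -- second t-derivative
  have key_t : deriv (fun t' => deriv (fun t'' => u t'' r) t') t
      = 4 * s ^ 3 * t / (s ^ 2 * t ^ 2 + r ^ 2) ^ 2 := by
    have hev : (fun t' => deriv (fun t'' => u t'' r) t')
        =ᶠ[nhds t] (fun t' => -2 * s / (s ^ 2 * t' ^ 2 + r ^ 2)) := by
      filter_upwards [eventually_gt_nhds ht] with t' ht'
      have : (fun t'' => u t'' r) = fun t'' => (2 / r) * Real.arctan (r / (s * t'')) := by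
        funext t''; rw [hu]
      rw [this]
      exact (L1 s r t' hs0.ne' hr.ne' ht'.ne').deriv
    rw [hev.deriv_eq]
    exact (L2 s r t hD).deriv
  -- first r-derivative
  have key_r1 : deriv (fun r'' => u t r'') r
      = -2 * Real.arctan (r / (s * t)) / r ^ 2
        + 2 * s * t / (r * (s ^ 2 * t ^ 2 + r ^ 2)) := by
    have : (fun r'' => u t r'') = fun r'' => (2 / r'') * Real.arctan (r'' / (s * t)) := by
      funext r''; rw [hu]
    rw [this]
    exact (L3 s r t hst hr.ne').deriv
  -- second r-derivative
  have key_r2 : deriv (fun r' => deriv (fun r'' => u t r'') r') r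
      = 4 * Real.arctan (r / (s * t)) / r ^ 3
        - 4 * s * t / (r ^ 2 * (s ^ 2 * t ^ 2 + r ^ 2))
        - 4 * s * t / (s ^ 2 * t ^ 2 + r ^ 2) ^ 2 := by
    have hev : (fun r' => deriv (fun r'' => u t r'') r')
        =ᶠ[nhds r] (fun r' => -2 * Real.arctan (r' / (s * t)) / r' ^ 2
          + 2 * s * t / (r' * (s ^ 2 * t ^ 2 + r' ^ 2))) := by
      filter_upwards [eventually_gt_nhds hr] with r' hr'
      have : (fun r'' => u t r'') = fun r'' => (2 / r'') * Real.arctan (r'' / (s * t)) := by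
        funext r''; rw [hu]
      rw [this]
      exact (L3 s r' t hst hr'.ne').deriv
    rw [hev.deriv_eq]
    exact (L4 s r t hst hr.ne').deriv
  -- sine term
  have hu_val : u t r = (2 / r) * Real.arctan (r / (s * t)) := hu t r
  have harg : 2 * r * u t r = 4 * Real.arctan (r / (s * t)) := by
    rw [hu_val]; field_simp; ring
  have hsin : Real.sin (2 * r * u t r)
      = 4 * (r / (s * t)) * (1 - (r / (s * t)) ^ 2) / (1 + (r / (s * t)) ^ 2) ^ 2 := by
    rw [harg, sin_four_arctan]
  rw [key_t, key_r1, key_r2, hsin, harg, hdd]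
  have hx : 1 + (r / (s * t)) ^ 2 ≠ 0 := by positivity
  set A := Real.arctan (r / (s * t))
  field_simp
  ring
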